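/- Let F be a field and let H1, H2 be matrices with the same number of rows m with rank([H1 H2]) = m (full row rank). If M2 is any matrix such that H2·M2 is defined, then rank([H1 H2·M2]) ≥ m − rank(H2) + rank(H2·M2). -/

import Mathlib

open Matrix

lemma range_fromColumns {F : Type*} [Field F] {m n1 n2 : ℕ}
    (A : Matrix (Fin m) (Fin n1) F) (B : Matrix (Fin m) (Fin n2) F) :
    LinearMap.range (fromCols A B).mulVecLin =
      LinearMap.range A.mulVecLin ⊔ LinearMap.range B.mulVecLin := by
  apply le_antisymm
  · rintro _ ⟨x, rfl⟩
    rw [mulVecLin_apply, ← Sum.elim_comp_inl_inr x, fromCols_mulVec_sumElim]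
    exact Submodule.add_mem_sup ⟨_, rfl⟩ ⟨_, rfl⟩
  · rw [sup_le_iff]
    constructor
    · rintro _ ⟨x, rfl⟩
      refine ⟨Sum.elim x 0, ?_⟩
      simp [fromCols_mulVec_sumElim]
    · rintro _ ⟨x, rfl⟩
      refine ⟨Sum.elim 0 x, ?_⟩
      simp [fromCols_mulVec_sumElim]

/-- If `[H1 H2]` has full row rank `m`, then
`rank [H1 H2·M2] ≥ m - rank H2 + rank (H2·M2)`. -/
theorem stmt_16 {F : Type*} [Field F] {m n1 n2 p : ℕ}
    (H1 : Matrix (Fin m) (Fin n1) F) (H2 : Matrix (Fin m) (Fin n2) F)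
    (hfull : (Matrix.fromCols H1 H2).rank = m)
    (M2 : Matrix (Fin n2) (Fin p) F) :
    (Matrix.fromCols H1 (H2 * M2)).rank ≥ m - H2.rank + (H2 * M2).rank := by
  set U := LinearMap.range H1.mulVecLin
  set V := LinearMap.range H2.mulVecLin
  set W := LinearMap.range (H2 * M2).mulVecLin
  have hWV : W ≤ V := by
    rintro _ ⟨x, rfl⟩
    rw [mulVecLin_apply, ← mulVec_mulVec]
    exact ⟨_, rfl⟩
  have h1 : (fromCols H1 H2).rank = Module.finrank F ↥(U ⊔ V) := by
    rw [Matrix.rank, range_fromColumns]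
  have h2 : (fromCols H1 (H2 * M2)).rank = Module.finrank F ↥(U ⊔ W) := by
    rw [Matrix.rank, range_fromColumns]
  have e1 := Submodule.finrank_sup_add_finrank_inf_eq U V
  have e2 := Submodule.finrank_sup_add_finrank_inf_eq U W
  have hle : Module.finrank F ↥(U ⊓ W) ≤ Module.finrank F ↥(U ⊓ V) :=
    Submodule.finrank_mono (inf_le_inf_left U hWV)
  rw [h1] at hfull
  rw [h2]
  have hrV : H2.rank = Module.finrank F V := rfl
  have hrW : (H2 * M2).rank = Module.finrank F W := rfl
  have hle2 : Module.finrank F ↥(U ⊓ V) ≤ Module.finrank F ↥U := Submodule.finrank_mono inf_le_left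
  omega
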